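/- For all n >= 0 and j >= 0, the number of partitions of n with exactly j even parts (counted with multiplicity) equals the number of partitions of n whose largest repeating part is j. -/

import Mathlib

open Nat

/-- The minimal excludant (mex) of a partition: the least positive integer
not occurring as a part. -/
noncomputable def mex {n : ℕ} (p : n.Partition) : ℕ :=
  sInf {k : ℕ | 0 < k ∧ k ∉ p.parts}

/-- The r-chain mex of a partition: the least positive integer k such that
none of k, k+1, ..., k+r-1 occurs as a part. -/
noncomputable def rchainMex (r : ℕ) {n : ℕ} (p : n.Partition) : ℕ :=
  sInf {k : ℕ | 0 < k ∧ ∀ i < r, k + i ∉ p.parts}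

/-- The largest r-repeating part: the largest integer occurring at least r
times as a part (0 if there is none). -/
noncomputable def largestRRep (r : ℕ) {n : ℕ} (p : n.Partition) : ℕ :=
  sSup {k : ℕ | r ≤ p.parts.count k}

/-!
# Euler's Partition Theorem

This file proves Theorem 45 from the [100 Theorems List](https://www.cs.ru.nl/~freek/100/).

The theorem concerns the counting of integer partitions -- ways of
writing a positive integer `n` as a sum of positive integer parts.

Specifically, Euler proved that the number of integer partitions of `n`
into *distinct* parts equals the number of partitions of `n` into *odd*
parts.

## Proof outline

The proof is based on the generating functions for odd and distinct partitions, which turn out to be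
equal:

$$\prod_{i=0}^\infty \frac {1}{1-X^{2i+1}} = \prod_{i=0}^\infty (1+X^{i+1})$$

In fact, we do not take a limit: it turns out that comparing the `n`'th coefficients of the partial
products up to `m := n + 1` is sufficient.

In particular, we

1. define the partial product for the generating function for odd partitions `partialOddGF m` :=
  $$\prod_{i=0}^m \frac {1}{1-X^{2i+1}}$$;
2. prove `oddGF_prop`: if `m` is big enough (`m * 2 > n`), the partial product's coefficient counts
  the number of odd partitions;
3. define the partial product for the generating function for distinct partitions
  `partialDistinctGF m` := $$\prod_{i=0}^m (1+X^{i+1})$$;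
4. prove `distinctGF_prop`: if `m` is big enough (`m + 1 > n`), the `n`th coefficient of the
  partial product counts the number of distinct partitions of `n`;
5. prove `same_coeffs`: if m is big enough (`m ≥ n`), the `n`th coefficient of the partial products
  are equal;
6. combine the above in `partition_theorem`.

## References
https://en.wikipedia.org/wiki/Partition_(number_theory)#Odd_parts_and_distinct_parts
-/


open PowerSeries

namespace Theorems100

noncomputable section

variable {α : Type*}

open Finset

open scoped Classical

/-- The partial product for the generating function for odd partitions.
TODO: As `m` tends to infinity, this converges (in the `X`-adic topology).

If `m` is sufficiently large, the `i`th coefficient gives the number of odd partitions of the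
natural number `i`: proved in `oddGF_prop`.
It is stated for an arbitrary field `α`, though it usually suffices to use `ℚ` or `ℝ`.
-/
def partialOddGF (m : ℕ) [Field α] :=
  ∏ i ∈ range m, (1 - (X : PowerSeries α) ^ (2 * i + 1))⁻¹

/-- The partial product for the generating function for distinct partitions.
TODO: As `m` tends to infinity, this converges (in the `X`-adic topology).

If `m` is sufficiently large, the `i`th coefficient gives the number of distinct partitions of the
natural number `i`: proved in `distinctGF_prop`.
It is stated for an arbitrary commutative semiring `α`, though it usually suffices to use `ℕ`, `ℚ`
or `ℝ`.
-/
def partialDistinctGF (m : ℕ) [CommSemiring α] :=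
  ∏ i ∈ range m, (1 + (X : PowerSeries α) ^ (i + 1))

open Finset.HasAntidiagonal

universe u
variable {ι : Type u}

/-- A convenience constructor for the power series whose coefficients indicate a subset. -/
def indicatorSeries (α : Type*) [Semiring α] (s : Set ℕ) : PowerSeries α :=
  PowerSeries.mk fun n => if n ∈ s then 1 else 0

theorem coeff_indicator (s : Set ℕ) [Semiring α] (n : ℕ) :
    coeff (R := α) n (indicatorSeries _ s) = if n ∈ s then 1 else 0 :=
  coeff_mk _ _

theorem coeff_indicator_pos (s : Set ℕ) [Semiring α] (n : ℕ) (h : n ∈ s) :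
    coeff (R := α) n (indicatorSeries _ s) = 1 := by rw [coeff_indicator, if_pos h]

theorem coeff_indicator_neg (s : Set ℕ) [Semiring α] (n : ℕ) (h : n ∉ s) :
    coeff (R := α) n (indicatorSeries _ s) = 0 := by rw [coeff_indicator, if_neg h]

theorem constantCoeff_indicator (s : Set ℕ) [Semiring α] :
    constantCoeff (R := α) (indicatorSeries _ s) = if 0 ∈ s then 1 else 0 :=
  rfl

theorem two_series (i : ℕ) [Semiring α] :
    1 + (X : PowerSeries α) ^ i.succ = indicatorSeries α {0, i.succ} := by
  ext n
  simp only [coeff_indicator, coeff_one, coeff_X_pow, Set.mem_insert_iff, Set.mem_singleton_iff,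
    map_add]
  cases' n with d
  · simp [(Nat.succ_ne_zero i).symm]
  · simp [Nat.succ_ne_zero d]

theorem num_series' [Field α] (i : ℕ) :
    (1 - (X : PowerSeries α) ^ (i + 1))⁻¹ = indicatorSeries α {k | i + 1 ∣ k} := by
  rw [PowerSeries.inv_eq_iff_mul_eq_one]
  · ext n
    cases n with
    | zero => simp [mul_sub, zero_pow, constantCoeff_indicator]
    | succ n =>
      simp only [coeff_one, if_false, mul_sub, mul_one, coeff_indicator,
        LinearMap.map_sub, reduceCtorEq]
      simp_rw [coeff_mul, coeff_X_pow, coeff_indicator, @boole_mul _ _ _ _]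
      erw [@sum_ite _ _ _ _ _ (fun _ => Classical.propDecidable _), sum_ite]
      simp_rw [@filter_filter _ _ _ _ _, sum_const_zero, add_zero, sum_const, nsmul_eq_mul, mul_one,
        sub_eq_iff_eq_add, zero_add]
      symm
      split_ifs with h
      · suffices #{a ∈ antidiagonal (n + 1) | i + 1 ∣ a.fst ∧ a.snd = i + 1} = 1 by
          simp only [Set.mem_setOf_eq]; convert congr_arg ((↑) : ℕ → α) this; norm_cast
        rw [card_eq_one]
        cases' h with p hp
        refine ⟨((i + 1) * (p - 1), i + 1), ?_⟩
        ext ⟨a₁, a₂⟩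
        simp only [mem_filter, Prod.mk.injEq, Finset.HasAntidiagonal.mem_antidiagonal, mem_singleton]
        constructor
        · rintro ⟨a_left, ⟨a, rfl⟩, rfl⟩
          refine ⟨?_, rfl⟩
          rw [Nat.mul_sub_left_distrib, ← hp, ← a_left, mul_one, Nat.add_sub_cancel]
        · rintro ⟨rfl, rfl⟩
          match p with
          | 0 => rw [mul_zero] at hp; cases hp
          | p + 1 => rw [hp]; simp [mul_add]
      · suffices #{a ∈ antidiagonal (n + 1) | i + 1 ∣ a.fst ∧ a.snd = i + 1} = 0 by
          simp only [Set.mem_setOf_eq]; convert congr_arg ((↑) : ℕ → α) this; norm_cast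
        rw [Finset.card_eq_zero]
        apply eq_empty_of_forall_notMem
        simp only [Prod.forall, mem_filter, not_and, Finset.HasAntidiagonal.mem_antidiagonal]
        rintro _ h₁ h₂ ⟨a, rfl⟩ rfl
        apply h
        simp [← h₂]
  · simp [zero_pow]

def mkOdd : ℕ ↪ ℕ :=
  ⟨fun i => 2 * i + 1, fun x y h => by linarith⟩

-- The main workhorse of the partition theorem proof.
theorem partialGF_prop (α : Type*) [CommSemiring α] (n : ℕ) (s : Finset ℕ) (hs : ∀ i ∈ s, 0 < i)
    (c : ℕ → Set ℕ) (hc : ∀ i, i ∉ s → 0 ∈ c i) :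
    #{p : n.Partition | (∀ j, p.parts.count j ∈ c j) ∧ ∀ j ∈ p.parts, j ∈ s} =
      coeff (R := α) n (∏ i ∈ s, indicatorSeries α ((· * i) '' c i)) := by
  simp_rw [coeff_prod, coeff_indicator, prod_boole, sum_boole]
  apply congr_arg
  simp only [mem_univ, forall_true_left, not_and, not_forall, exists_prop,
    Set.mem_image, not_exists]
  set phiAux : (a : Nat.Partition n) →
    a ∈ filter (fun p ↦ (∀ (j : ℕ), Multiset.count j p.parts ∈ c j) ∧ ∀ j ∈ p.parts, j ∈ s) univ →
    ℕ →₀ ℕ := fun p _ => {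
      toFun := fun i => Multiset.count i p.parts • i
      support := Finset.filter (fun i => i ≠ 0) p.parts.toFinset
      mem_support_toFun := fun a => by
        simp only [smul_eq_mul, ne_eq, mul_eq_zero, Multiset.count_eq_zero]
        rw [not_or, not_not]
        simp only [Multiset.mem_toFinset, not_not, mem_filter] }
  refine Finset.card_bij phiAux ?_ ?_ ?_
  · intro a ha
    simp only [phiAux, not_forall, not_exists, not_and, exists_prop, mem_filter]
    rw [mem_finsuppAntidiag]
    dsimp only [ne_eq, smul_eq_mul, id_eq, eq_mpr_eq_cast, le_eq_subset, Finsupp.coe_mk]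
    simp only [mem_univ, forall_true_left, not_and, not_forall, exists_prop,
      mem_filter, true_and] at ha
    refine ⟨⟨?_, fun i ↦ ?_⟩, fun i _ ↦ ⟨a.parts.count i, ha.1 i, rfl⟩⟩
    · conv_rhs => simp [← a.parts_sum]
      rw [sum_multiset_count_of_subset _ s]
      · simp only [smul_eq_mul]
      · intro i
        simp only [Multiset.mem_toFinset, not_not, mem_filter]
        apply ha.2
    · simp only [ne_eq, Multiset.mem_toFinset, not_not, mem_filter, and_imp]
      exact fun hi _ ↦ ha.2 i hi
  · intro p₁ hp₁ p₂ hp₂ h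
    apply Nat.Partition.ext
    simp only [true_and, mem_univ, mem_filter] at hp₁ hp₂
    ext i
    simp only [phiAux, ne_eq, Multiset.mem_toFinset, not_not, smul_eq_mul, Finsupp.mk.injEq] at h
    by_cases hi : i = 0
    · rw [hi]
      rw [Multiset.count_eq_zero_of_notMem]
      · rw [Multiset.count_eq_zero_of_notMem]
        intro a; exact Nat.lt_irrefl 0 (hs 0 (hp₂.2 0 a))
      intro a; exact Nat.lt_irrefl 0 (hs 0 (hp₁.2 0 a))
    · rw [← mul_left_inj' hi]
      rw [funext_iff] at h
      exact h.2 i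
  · simp only [phiAux, mem_filter, mem_finsuppAntidiag, mem_univ, exists_prop, true_and, and_assoc]
    rintro f ⟨hf, hf₃, hf₄⟩
    have hf' : f ∈ finsuppAntidiag s n := mem_finsuppAntidiag.mpr ⟨hf, hf₃⟩
    simp only [mem_finsuppAntidiag] at hf'
    refine ⟨⟨∑ i ∈ s, Multiset.replicate (f i / i) i, ?_, ?_⟩, ?_, ?_, ?_⟩
    · intro i hi
      simp only [exists_prop, Multiset.mem_sum, mem_map, Function.Embedding.coeFn_mk] at hi
      rcases hi with ⟨t, ht, z⟩
      apply hs
      rwa [Multiset.eq_of_mem_replicate z]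
    · simp_rw [Multiset.sum_sum, Multiset.sum_replicate, Nat.nsmul_eq_mul]
      rw [← hf'.1]
      refine sum_congr rfl fun i hi => Nat.div_mul_cancel ?_
      rcases hf₄ i hi with ⟨w, _, hw₂⟩
      rw [← hw₂]
      exact dvd_mul_left _ _
    · intro i
      simp_rw [Multiset.count_sum', Multiset.count_replicate, sum_ite_eq']
      split_ifs with h
      · rcases hf₄ i h with ⟨w, hw₁, hw₂⟩
        rwa [← hw₂, Nat.mul_div_cancel _ (hs i h)]
      · exact hc _ h
    · intro i hi
      rw [Multiset.mem_sum] at hi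
      rcases hi with ⟨j, hj₁, hj₂⟩
      rwa [Multiset.eq_of_mem_replicate hj₂]
    · ext i
      simp_rw [Multiset.count_sum', Multiset.count_replicate, sum_ite_eq']
      simp only [ne_eq, Multiset.mem_toFinset, not_not, smul_eq_mul, ite_mul,
        zero_mul, Finsupp.coe_mk]
      split_ifs with h
      · apply Nat.div_mul_cancel
        rcases hf₄ i h with ⟨w, _, hw₂⟩
        apply Dvd.intro_left _ hw₂
      · apply symm
        rw [← Finsupp.notMem_support_iff]
        exact notMem_mono hf'.2 h

theorem partialOddGF_prop [Field α] (n m : ℕ) :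
    #{p : n.Partition | ∀ j ∈ p.parts, j ∈ (range m).map mkOdd} = coeff (R := α) n (partialOddGF m) := by
  rw [partialOddGF]
  convert partialGF_prop α n
    ((range m).map mkOdd) _ (fun _ => Set.univ) (fun _ _ => trivial) using 2
  · congr
    simp only [true_and, forall_const, Set.mem_univ]
  · rw [Finset.prod_map]
    simp_rw [num_series']
    congr! 2 with x
    ext k
    constructor
    · rintro ⟨p, rfl⟩
      refine ⟨p, ⟨⟩, ?_⟩
      apply mul_comm
    rintro ⟨a_w, -, rfl⟩
    apply Dvd.intro_left a_w rfl
  · intro i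
    rw [mem_map]
    rintro ⟨a, -, rfl⟩
    exact Nat.succ_pos _

/-- If m is big enough, the partial product's coefficient counts the number of odd partitions -/
theorem oddGF_prop [Field α] (n m : ℕ) (h : n < m * 2) :
    #(Nat.Partition.odds n) = coeff (R := α) n (partialOddGF m) := by
  rw [← partialOddGF_prop, Nat.Partition.odds, Nat.Partition.restricted]
  congr with p
  apply forall₂_congr
  intro i hi
  have hin : i ≤ n := by
    simpa [p.parts_sum] using Multiset.single_le_sum (fun _ _ => Nat.zero_le _) _ hi
  simp only [mkOdd, exists_prop, mem_range, Function.Embedding.coeFn_mk, mem_map]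
  constructor
  · intro hi₂
    have := Nat.mod_add_div i 2
    rw [Nat.not_even_iff] at hi₂
    rw [hi₂, add_comm] at this
    refine ⟨i / 2, ?_, this⟩
    rw [Nat.div_lt_iff_lt_mul zero_lt_two]
    exact lt_of_le_of_lt hin h
  · rintro ⟨a, -, rfl⟩
    rw [even_iff_two_dvd]
    apply Nat.two_not_dvd_two_mul_add_one

theorem partialDistinctGF_prop [CommSemiring α] (n m : ℕ) :
    #{p : n.Partition |
        p.parts.Nodup ∧ ∀ j ∈ p.parts, j ∈ (range m).map ⟨Nat.succ, Nat.succ_injective⟩} =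
      coeff (R := α) n (partialDistinctGF m) := by
  rw [partialDistinctGF]
  convert partialGF_prop α n
    ((range m).map ⟨Nat.succ, Nat.succ_injective⟩) _ (fun _ => {0, 1}) (fun _ _ => Or.inl rfl)
    using 2
  · congr! with p
    rw [Multiset.nodup_iff_count_le_one]
    congr! 1 with i
    rcases Multiset.count i p.parts with (_ | _ | ms) <;> simp
  · simp_rw [Finset.prod_map, two_series]
    congr with i
    simp [Set.image_pair]
  · simp only [mem_map, Function.Embedding.coeFn_mk]
    rintro i ⟨_, _, rfl⟩
    apply Nat.succ_pos

/-- If m is big enough, the partial product's coefficient counts the number of distinct partitions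
-/
theorem distinctGF_prop [CommSemiring α] (n m : ℕ) (h : n < m + 1) :
    #(Nat.Partition.distincts n) = coeff (R := α) n (partialDistinctGF m) := by
  rw [← partialDistinctGF_prop, Nat.Partition.distincts]
  congr with p
  apply (and_iff_left _).symm
  intro i hi
  have : i ≤ n := by
    simpa [p.parts_sum] using Multiset.single_le_sum (fun _ _ => Nat.zero_le _) _ hi
  simp only [mkOdd, exists_prop, mem_range, Function.Embedding.coeFn_mk, mem_map]
  refine ⟨i - 1, ?_, Nat.succ_pred_eq_of_pos (p.parts_pos hi)⟩
  rw [tsub_lt_iff_right (Nat.one_le_iff_ne_zero.mpr (p.parts_pos hi).ne')]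
  exact lt_of_le_of_lt this h

/-- The key proof idea for the partition theorem, showing that the generating functions for both
sequences are ultimately the same (since the factor converges to 0 as m tends to infinity).
It's enough to not take the limit though, and just consider large enough `m`.
-/
theorem same_gf [Field α] (m : ℕ) :
    (partialOddGF m * (range m).prod fun i => 1 - (X : PowerSeries α) ^ (m + i + 1)) =
      partialDistinctGF m := by
  rw [partialOddGF, partialDistinctGF]
  induction' m with m ih
  · simp
  set! π₀ : PowerSeries α := ∏ i ∈ range m, (1 - X ^ (m + 1 + i + 1)) with hπ₀
  set! π₁ : PowerSeries α := ∏ i ∈ range m, (1 - X ^ (2 * i + 1))⁻¹ with hπ₁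
  set! π₂ : PowerSeries α := ∏ i ∈ range m, (1 - X ^ (m + i + 1)) with hπ₂
  set! π₃ : PowerSeries α := ∏ i ∈ range m, (1 + X ^ (i + 1)) with hπ₃
  rw [← hπ₃] at ih
  have h : constantCoeff (R := α) (1 - X ^ (2 * m + 1)) ≠ 0 := by
    rw [RingHom.map_sub, RingHom.map_pow, constantCoeff_one, constantCoeff_X,
      zero_pow (2 * m).succ_ne_zero, sub_zero]
    exact one_ne_zero
  calc
    (∏ i ∈ range (m + 1), (1 - X ^ (2 * i + 1))⁻¹) *
          ∏ i ∈ range (m + 1), (1 - X ^ (m + 1 + i + 1)) =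
        π₁ * (1 - X ^ (2 * m + 1))⁻¹ * (π₀ * (1 - X ^ (m + 1 + m + 1))) := by
      rw [prod_range_succ _ m, ← hπ₁, prod_range_succ _ m, ← hπ₀]
    _ = π₁ * (1 - X ^ (2 * m + 1))⁻¹ * (π₀ * ((1 + X ^ (m + 1)) * (1 - X ^ (m + 1)))) := by
      rw [← _root_.sq_sub_sq, one_pow, add_assoc _ m 1, ← two_mul (m + 1), pow_mul']
    _ = π₀ * (1 - X ^ (m + 1)) * (1 - X ^ (2 * m + 1))⁻¹ * (π₁ * (1 + X ^ (m + 1))) := by ring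
    _ =
        (∏ i ∈ range (m + 1), (1 - X ^ (m + 1 + i))) * (1 - X ^ (2 * m + 1))⁻¹ *
          (π₁ * (1 + X ^ (m + 1))) := by
      rw [prod_range_succ', add_zero, hπ₀]; simp_rw [← add_assoc]
    _ = π₂ * (1 - X ^ (m + 1 + m)) * (1 - X ^ (2 * m + 1))⁻¹ * (π₁ * (1 + X ^ (m + 1))) := by
      rw [add_right_comm, hπ₂, ← prod_range_succ]; simp_rw [add_right_comm]
    _ = π₂ * (1 - X ^ (2 * m + 1)) * (1 - X ^ (2 * m + 1))⁻¹ * (π₁ * (1 + X ^ (m + 1))) := by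
      rw [two_mul, add_right_comm _ m 1]
    _ = (1 - X ^ (2 * m + 1)) * (1 - X ^ (2 * m + 1))⁻¹ * π₂ * (π₁ * (1 + X ^ (m + 1))) := by ring
    _ = π₂ * (π₁ * (1 + X ^ (m + 1))) := by rw [PowerSeries.mul_inv_cancel _ h, one_mul]
    _ = π₁ * π₂ * (1 + X ^ (m + 1)) := by ring
    _ = π₃ * (1 + X ^ (m + 1)) := by rw [ih]
    _ = _ := by rw [prod_range_succ]

theorem same_coeffs [Field α] (m n : ℕ) (h : n ≤ m) :
    coeff (R := α) n (partialOddGF m) = coeff (R := α) n (partialDistinctGF m) := by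
  rw [← same_gf, coeff_mul_prod_one_sub_of_lt_order]
  rintro i -
  rw [order_X_pow]
  exact mod_cast Nat.lt_succ_of_le (le_add_right h)

theorem partition_theorem (n : ℕ) : #(Nat.Partition.odds n) = #(Nat.Partition.distincts n) := by
  suffices (#(Nat.Partition.odds n) : ℚ) = #(Nat.Partition.distincts n) from
    mod_cast this
  rw [distinctGF_prop n (n + 1) (by linarith)]
  rw [oddGF_prop n (n + 1) (by linarith)]
  apply same_coeffs (n + 1) n n.le_succ

end

end Theorems100

namespace EvenRep
open Multiset

noncomputable def NA (n j : ℕ) : ℕ :=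
  Nat.card {p : n.Partition // (p.parts.filter (fun x => Even x)).card = j}
noncomputable def NB (n j : ℕ) : ℕ :=
  Nat.card {p : n.Partition // largestRRep 2 p = j}

lemma part_le {n : ℕ} (p : n.Partition) {k : ℕ} (hk : k ∈ p.parts) : k ≤ n :=
  (Multiset.le_sum_of_mem hk).trans_eq p.parts_sum

lemma count_zero_parts {n : ℕ} (p : n.Partition) : p.parts.count 0 = 0 :=
  Multiset.count_eq_zero_of_notMem (fun h => lt_irrefl 0 (p.parts_pos h))

lemma largestRRep_eq_iff {n : ℕ} (p : n.Partition) (j : ℕ) :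
    largestRRep 2 p = j ↔
      (j = 0 ∨ 2 ≤ p.parts.count j) ∧ ∀ k, j < k → p.parts.count k ≤ 1 := by
  set S : Set ℕ := {k : ℕ | 2 ≤ p.parts.count k} with hS
  have hbdd : BddAbove S := ⟨n, fun k hk => part_le p (by
    rw [← Multiset.count_pos]; exact lt_of_lt_of_le (by norm_num) hk)⟩
  constructor
  · intro h
    rcases Set.eq_empty_or_nonempty S with he | hne
    · have h0 : largestRRep 2 p = 0 := by
        rw [largestRRep, ← hS, he, csSup_empty]; rfl
      have hj : j = 0 := by rw [← h, h0]
      refine ⟨Or.inl hj, fun k _ => ?_⟩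
      by_contra hk
      have : k ∈ S := by simp only [hS, Set.mem_setOf_eq]; omega
      rw [he] at this; exact this
    · have hmem : sSup S ∈ S := Nat.sSup_mem hne hbdd
      rw [largestRRep, ← hS] at h
      rw [h] at hmem
      refine ⟨Or.inr hmem, fun k hk => ?_⟩
      by_contra hc
      have : k ∈ S := by simp only [hS, Set.mem_setOf_eq]; omega
      have := le_csSup hbdd this
      omega
  · rintro ⟨h1, h2⟩
    rcases h1 with rfl | h1
    · have he : S = ∅ := by
        ext k
        simp only [hS, Set.mem_setOf_eq, Set.mem_empty_iff_false, iff_false, not_le]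
        rcases Nat.eq_zero_or_pos k with rfl | hk
        · rw [count_zero_parts]; omega
        · have := h2 k hk; omega
      rw [largestRRep, ← hS, he, csSup_empty]; rfl
    · have hmem : j ∈ S := h1
      apply le_antisymm
      · apply csSup_le ⟨j, hmem⟩
        intro k hk
        by_contra hc
        have := h2 k (by omega)
        simp only [hS, Set.mem_setOf_eq] at hk
        omega
      · exact le_csSup hbdd hmem

lemma card_split {α : Type*} [Finite α] (P Q : α → Prop) :
    Nat.card {x // P x} =
      Nat.card {x // P x ∧ Q x} + Nat.card {x // P x ∧ ¬ Q x} := by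
  classical
  rw [← Nat.card_sum]
  apply Nat.card_congr
  refine ⟨fun x => if h : Q x.1 then Sum.inl ⟨x.1, x.2, h⟩ else Sum.inr ⟨x.1, x.2, h⟩,
    Sum.elim (fun a => ⟨a.1, a.2.1⟩) (fun a => ⟨a.1, a.2.1⟩), ?_, ?_⟩
  · intro x; by_cases h : Q x.1 <;> simp [h]
  · rintro (⟨a, ha⟩ | ⟨a, ha⟩) <;> simp [ha.2]

lemma NA_eq_zero (n j : ℕ) (h : n < 2 * (j + 1)) : NA n (j + 1) = 0 := by
  have : IsEmpty {p : n.Partition // (p.parts.filter (fun x => Even x)).card = j + 1} := by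
    constructor
    rintro ⟨p, hp⟩
    have h1 : ∀ x ∈ p.parts.filter (fun x => Even x), 2 ≤ x := by
      intro x hx
      have hm := Multiset.mem_filter.1 hx
      have hpos := p.parts_pos hm.1
      rcases hm.2 with ⟨c, rfl⟩; omega
    have h2 := Multiset.card_nsmul_le_sum h1
    rw [hp, smul_eq_mul] at h2
    have h3 : (p.parts.filter (fun x => Even x)).sum ≤ n := by
      have h4 := congrArg Multiset.sum (Multiset.filter_add_not (fun x => Even x) p.parts)
      rw [Multiset.sum_add, p.parts_sum] at h4
      omega
    omega
  rw [NA]; exact Nat.card_of_isEmpty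

lemma NB_eq_zero (n j : ℕ) (h : n < 2 * (j + 1)) : NB n (j + 1) = 0 := by
  have : IsEmpty {p : n.Partition // largestRRep 2 p = j + 1} := by
    constructor
    rintro ⟨p, hp⟩
    obtain ⟨h1, -⟩ := (largestRRep_eq_iff p (j + 1)).1 hp
    rcases h1 with h1 | h1
    · omega
    · have hle : Multiset.replicate 2 (j + 1) ≤ p.parts :=
        Multiset.le_count_iff_replicate_le.1 h1
      obtain ⟨u, hu⟩ := Multiset.le_iff_exists_add.1 hle
      have := congrArg Multiset.sum hu
      rw [Multiset.sum_add, Multiset.sum_replicate, smul_eq_mul, p.parts_sum] at this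
      omega
  rw [NB]; exact Nat.card_of_isEmpty

end EvenRep

namespace EvenRep
open Multiset

def fshift (x : ℕ) : ℕ := if Even x then x - 2 else x
def gshift (x : ℕ) : ℕ := if Even x then x + 2 else x

lemma even_fshift (x : ℕ) : Even (fshift x) ↔ Even x := by
  unfold fshift
  split
  · rename_i he
    obtain ⟨c, rfl⟩ := he
    constructor
    · intro _; exact ⟨c, rfl⟩
    · intro _; exact ⟨c - 1, by omega⟩
  · exact Iff.rfl

lemma even_gshift (x : ℕ) : Even (gshift x) ↔ Even x := by
  unfold gshift
  split
  · rename_i he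
    obtain ⟨c, rfl⟩ := he
    exact ⟨fun _ => ⟨c, rfl⟩, fun _ => ⟨c + 1, by omega⟩⟩
  · exact Iff.rfl

lemma sum_map_fshift (s : Multiset ℕ) (h : ∀ x ∈ s, Even x → 2 ≤ x) :
    (s.map fshift).sum + 2 * (s.filter (fun x => Even x)).card = s.sum := by
  induction s using Multiset.induction with
  | empty => simp
  | cons a s ih =>
    have ha := h a (Multiset.mem_cons_self a s)
    have ih' := ih (fun x hx => h x (Multiset.mem_cons_of_mem hx))
    by_cases he : Even a
    · rw [Multiset.map_cons, Multiset.sum_cons, Multiset.filter_cons_of_pos (p := fun x => Even x) _ he,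
        Multiset.card_cons, Multiset.sum_cons]
      have h2 := ha he
      have hf : fshift a = a - 2 := if_pos he
      omega
    · rw [Multiset.map_cons, Multiset.sum_cons, Multiset.filter_cons_of_neg (p := fun x => Even x) _ he,
        Multiset.sum_cons]
      have hf : fshift a = a := if_neg he
      omega

lemma sum_map_gshift (s : Multiset ℕ) :
    (s.map gshift).sum = s.sum + 2 * (s.filter (fun x => Even x)).card := by
  induction s using Multiset.induction with
  | empty => simp
  | cons a s ih =>
    by_cases he : Even a
    · rw [Multiset.map_cons, Multiset.sum_cons, Multiset.filter_cons_of_pos (p := fun x => Even x) _ he,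
        Multiset.card_cons, Multiset.sum_cons]
      have hf : gshift a = a + 2 := if_pos he
      omega
    · rw [Multiset.map_cons, Multiset.sum_cons, Multiset.filter_cons_of_neg (p := fun x => Even x) _ he,
        Multiset.sum_cons]
      have hf : gshift a = a := if_neg he
      omega

lemma card_filter_map_fshift (s : Multiset ℕ) :
    ((s.map fshift).filter (fun x => Even x)).card = (s.filter (fun x => Even x)).card := by
  rw [Multiset.filter_map]
  rw [Multiset.filter_congr (fun x _ => by simpa using (even_fshift x))]
  rw [Multiset.card_map]

lemma card_filter_map_gshift (s : Multiset ℕ) :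
    ((s.map gshift).filter (fun x => Even x)).card = (s.filter (fun x => Even x)).card := by
  rw [Multiset.filter_map]
  rw [Multiset.filter_congr (fun x _ => by simpa using (even_gshift x))]
  rw [Multiset.card_map]

def equivA1 (n j : ℕ) (hn : 2 ≤ n) :
    {p : n.Partition // (p.parts.filter (fun x => Even x)).card = j + 1 ∧ 2 ∈ p.parts} ≃
      {q : (n - 2).Partition // (q.parts.filter (fun x => Even x)).card = j} where
  toFun p := ⟨⟨p.1.parts.erase 2,
      fun hi => p.1.parts_pos (Multiset.mem_of_mem_erase hi), by
      have h := congrArg Multiset.sum (Multiset.cons_erase p.2.2)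
      rw [Multiset.sum_cons, p.1.parts_sum] at h
      omega⟩, by
      have h := p.2.1
      conv_lhs at h => rw [← Multiset.cons_erase p.2.2]
      rw [Multiset.filter_cons_of_pos _ (by norm_num : Even 2), Multiset.card_cons] at h
      simpa using h⟩
  invFun q := ⟨⟨2 ::ₘ q.1.parts, fun hi => by
        rcases Multiset.mem_cons.1 hi with rfl | hi
        · omega
        · exact q.1.parts_pos hi, by
        rw [Multiset.sum_cons, q.1.parts_sum]; omega⟩, by
      constructor
      · rw [Multiset.filter_cons_of_pos _ (by norm_num : Even 2), Multiset.card_cons, q.2]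
      · exact Multiset.mem_cons_self _ _⟩
  left_inv p := by
    apply Subtype.ext; apply Nat.Partition.ext
    exact Multiset.cons_erase p.2.2
  right_inv q := by
    apply Subtype.ext; apply Nat.Partition.ext
    exact Multiset.erase_cons_head _ _

def equivA2 (n j : ℕ) (hn : 2 * j ≤ n) :
    {p : n.Partition // (p.parts.filter (fun x => Even x)).card = j ∧ 2 ∉ p.parts} ≃
      {q : (n - 2 * j).Partition // (q.parts.filter (fun x => Even x)).card = j} where
  toFun p := by
    refine ⟨⟨p.1.parts.map fshift, ?_, ?_⟩, ?_⟩
    · intro i hi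
      obtain ⟨x, hx, rfl⟩ := Multiset.mem_map.1 hi
      have hpos := p.1.parts_pos hx
      unfold fshift
      split
      · rename_i he
        obtain ⟨c, rfl⟩ := he
        have : c + c ≠ 2 := fun h => p.2.2 (by rw [h] at hx; exact hx)
        omega
      · exact hpos
    · have h4 : ∀ x ∈ p.1.parts, Even x → 2 ≤ x := by
        intro x hx hex
        obtain ⟨c, rfl⟩ := hex
        have := p.1.parts_pos hx
        have : c + c ≠ 2 := fun h => p.2.2 (by rw [h] at hx; exact hx)
        omega
      have := sum_map_fshift p.1.parts h4
      rw [p.1.parts_sum, p.2.1] at this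
      omega
    · rw [card_filter_map_fshift, p.2.1]
  invFun q := by
    refine ⟨⟨q.1.parts.map gshift, ?_, ?_⟩, ?_, ?_⟩
    · intro i hi
      obtain ⟨x, hx, rfl⟩ := Multiset.mem_map.1 hi
      have hpos := q.1.parts_pos hx
      unfold gshift
      split
      · omega
      · exact hpos
    · rw [sum_map_gshift, q.1.parts_sum, q.2]
      omega
    · rw [card_filter_map_gshift, q.2]
    · intro hmem
      obtain ⟨x, hx, hgx⟩ := Multiset.mem_map.1 hmem
      have hpos := q.1.parts_pos hx
      unfold gshift at hgx
      split at hgx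
      · omega
      · rename_i he
        exact he (hgx ▸ (by norm_num : Even 2))
  left_inv p := by
    apply Subtype.ext; apply Nat.Partition.ext
    show (p.1.parts.map fshift).map gshift = p.1.parts
    rw [Multiset.map_map]
    rw [Multiset.map_congr rfl (fun x hx => ?_), Multiset.map_id']
    have hpos := p.1.parts_pos hx
    have hne : x ≠ 2 := fun h => p.2.2 (by rw [h] at hx; exact hx)
    show gshift (fshift x) = x
    by_cases he : Even x
    · obtain ⟨c, rfl⟩ := he
      have hf : fshift (c + c) = c + c - 2 := if_pos ⟨c, rfl⟩
      have hef : Even (c + c - 2) := ⟨c - 1, by omega⟩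
      rw [hf]
      have hg : gshift (c + c - 2) = c + c - 2 + 2 := if_pos hef
      rw [hg]; omega
    · rw [show fshift x = x from if_neg he, show gshift x = x from if_neg he]
  right_inv q := by
    apply Subtype.ext; apply Nat.Partition.ext
    show (q.1.parts.map gshift).map fshift = q.1.parts
    rw [Multiset.map_map]
    rw [Multiset.map_congr rfl (fun x hx => ?_), Multiset.map_id']
    show fshift (gshift x) = x
    by_cases he : Even x
    · obtain ⟨c, rfl⟩ := he
      have hg : gshift (c + c) = c + c + 2 := if_pos ⟨c, rfl⟩
      rw [hg, show fshift (c + c + 2) = c + c + 2 - 2 from if_pos ⟨c + 1, by omega⟩]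
      omega
    · rw [show gshift x = x from if_neg he, show fshift x = x from if_neg he]

end EvenRep

namespace EvenRep
open Multiset

def B1parts (j : ℕ) (s : Multiset ℕ) : Multiset ℕ :=
  s - Multiset.replicate 2 (j + 1) + (Multiset.replicate 2 j).filter (0 < ·)

def B1parts' (j : ℕ) (t : Multiset ℕ) : Multiset ℕ :=
  t - (Multiset.replicate 2 j).filter (0 < ·) + Multiset.replicate 2 (j + 1)

lemma count_r' (j k : ℕ) :
    Multiset.count k ((Multiset.replicate 2 j).filter (0 < ·)) =
      if k = j ∧ 0 < j then 2 else 0 := by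
  rw [Multiset.count_filter, Multiset.count_replicate]
  rcases eq_or_ne k j with rfl | hk <;> split_ifs <;> omega

lemma countB1 (s : Multiset ℕ) (j k : ℕ) :
    Multiset.count k (B1parts j s) =
      Multiset.count k s - (if k = j + 1 then 2 else 0) + (if k = j ∧ 0 < j then 2 else 0) := by
  rw [B1parts, Multiset.count_add, Multiset.count_sub, Multiset.count_replicate, count_r']
  split_ifs <;> omega

lemma countB1' (t : Multiset ℕ) (j k : ℕ) :
    Multiset.count k (B1parts' j t) =
      Multiset.count k t - (if k = j ∧ 0 < j then 2 else 0) + (if k = j + 1 then 2 else 0) := by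
  rw [B1parts', Multiset.count_add, Multiset.count_sub, Multiset.count_replicate, count_r']
  split_ifs <;> omega

lemma B1_inv (j : ℕ) (s : Multiset ℕ) (h : 2 ≤ s.count (j + 1)) :
    B1parts' j (B1parts j s) = s := by
  apply Multiset.ext.2
  intro k
  rw [countB1', countB1]
  rcases eq_or_ne k (j + 1) with rfl | hk1 <;> split_ifs <;> omega

lemma B1_inv' (j : ℕ) (t : Multiset ℕ) (h : j = 0 ∨ 2 ≤ t.count j) :
    B1parts j (B1parts' j t) = t := by
  apply Multiset.ext.2
  intro k
  rw [countB1, countB1']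
  rcases eq_or_ne k (j + 1) with rfl | hk1
  · split_ifs <;> omega
  · rcases eq_or_ne k j with rfl | hk2 <;> split_ifs <;> omega

lemma sum_r' (j : ℕ) : ((Multiset.replicate 2 j).filter (0 < ·)).sum = 2 * j := by
  rcases Nat.eq_zero_or_pos j with rfl | hj
  · rw [Multiset.filter_eq_nil.2 (fun a ha => by rw [Multiset.eq_of_mem_replicate ha]; omega)]
    rfl
  · rw [Multiset.filter_eq_self.2 (fun x hx => by rw [Multiset.eq_of_mem_replicate hx]; exact hj),
      Multiset.sum_replicate, smul_eq_mul]

lemma r'_le {j : ℕ} {t : Multiset ℕ} (h : j = 0 ∨ 2 ≤ t.count j) :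
    (Multiset.replicate 2 j).filter (0 < ·) ≤ t := by
  rw [Multiset.le_iff_count]
  intro a
  rw [count_r' j a]
  split
  · rename_i ha
    obtain ⟨rfl, hj⟩ := ha
    rcases h with rfl | h
    · omega
    · exact h
  · omega

def equivB1 (n j : ℕ) (hn : 2 ≤ n) :
    {p : n.Partition // largestRRep 2 p = j + 1 ∧ p.parts.count (j + 1) ≤ 3} ≃
      {q : (n - 2).Partition // largestRRep 2 q = j} where
  toFun p := by
    have hch := (largestRRep_eq_iff p.1 (j + 1)).1 p.2.1
    have hcnt : 2 ≤ p.1.parts.count (j + 1) := by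
      rcases hch.1 with h | h; · omega
      · exact h
    have hc3 := p.2.2
    have hr : Multiset.replicate 2 (j + 1) ≤ p.1.parts :=
      Multiset.le_count_iff_replicate_le.1 hcnt
    have h5 := congrArg Multiset.sum (tsub_add_cancel_of_le hr)
    rw [Multiset.sum_add, Multiset.sum_replicate, smul_eq_mul, p.1.parts_sum] at h5
    refine ⟨⟨B1parts j p.1.parts, ?_, ?_⟩, ?_⟩
    · intro i hi
      rcases Multiset.mem_add.1 hi with hi | hi
      · exact p.1.parts_pos (Multiset.mem_of_le tsub_le_self hi)
      · exact (Multiset.mem_filter.1 hi).2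
    · rw [B1parts, Multiset.sum_add, sum_r']
      omega
    · rw [largestRRep_eq_iff]
      constructor
      · rcases Nat.eq_zero_or_pos j with rfl | hj
        · exact Or.inl rfl
        · right
          rw [countB1]
          split_ifs <;> omega
      · intro k hk
        rw [countB1]
        rcases eq_or_ne k (j + 1) with rfl | hk1
        · split_ifs <;> omega
        · have hk2 := hch.2 k (by omega)
          split_ifs <;> omega
  invFun q := by
    have hch := (largestRRep_eq_iff q.1 j).1 q.2
    have hle : (Multiset.replicate 2 j).filter (0 < ·) ≤ q.1.parts := r'_le hch.1
    have h5 := congrArg Multiset.sum (tsub_add_cancel_of_le hle)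
    rw [Multiset.sum_add, sum_r', q.1.parts_sum] at h5
    refine ⟨⟨B1parts' j q.1.parts, ?_, ?_⟩, ?_, ?_⟩
    · intro i hi
      rcases Multiset.mem_add.1 hi with hi | hi
      · exact q.1.parts_pos (Multiset.mem_of_le tsub_le_self hi)
      · rw [Multiset.eq_of_mem_replicate hi]; omega
    · rw [B1parts', Multiset.sum_add, Multiset.sum_replicate, smul_eq_mul]
      omega
    · rw [largestRRep_eq_iff]
      constructor
      · right
        rw [countB1']
        split_ifs <;> omega
      · intro k hk
        rw [countB1']
        have hk2 := hch.2 k (by omega)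
        rcases eq_or_ne k (j + 1) with rfl | hk1 <;> split_ifs <;> omega
    · rw [countB1']
      have hk2 := hch.2 (j + 1) (by omega)
      split_ifs <;> omega
  left_inv p := by
    have hch := (largestRRep_eq_iff p.1 (j + 1)).1 p.2.1
    have hcnt : 2 ≤ p.1.parts.count (j + 1) := by
      rcases hch.1 with h | h; · omega
      · exact h
    apply Subtype.ext; apply Nat.Partition.ext
    exact B1_inv j _ hcnt
  right_inv q := by
    have hch := (largestRRep_eq_iff q.1 j).1 q.2
    apply Subtype.ext; apply Nat.Partition.ext
    exact B1_inv' j _ hch.1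

def equivB2 (n j : ℕ) (hn : 2 * (j + 1) ≤ n) :
    {p : n.Partition // largestRRep 2 p = j + 1 ∧ ¬p.parts.count (j + 1) ≤ 3} ≃
      {q : (n - 2 * (j + 1)).Partition // largestRRep 2 q = j + 1} where
  toFun p := by
    have hch := (largestRRep_eq_iff p.1 (j + 1)).1 p.2.1
    have hc4 : 4 ≤ p.1.parts.count (j + 1) := by omega
    have hr : Multiset.replicate 2 (j + 1) ≤ p.1.parts :=
      Multiset.le_count_iff_replicate_le.1 (by omega)
    have h5 := congrArg Multiset.sum (tsub_add_cancel_of_le hr)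
    rw [Multiset.sum_add, Multiset.sum_replicate, smul_eq_mul, p.1.parts_sum] at h5
    refine ⟨⟨p.1.parts - Multiset.replicate 2 (j + 1), ?_, ?_⟩, ?_⟩
    · intro i hi
      exact p.1.parts_pos (Multiset.mem_of_le tsub_le_self hi)
    · omega
    · rw [largestRRep_eq_iff]
      refine ⟨Or.inr ?_, fun k hk => ?_⟩
      · rw [Multiset.count_sub, Multiset.count_replicate]
        split_ifs <;> omega
      · rw [Multiset.count_sub, Multiset.count_replicate]
        have hk2 := hch.2 k hk
        rcases eq_or_ne k (j + 1) with rfl | hk1 <;> split_ifs <;> omega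
  invFun q := by
    have hch := (largestRRep_eq_iff q.1 (j + 1)).1 q.2
    refine ⟨⟨q.1.parts + Multiset.replicate 2 (j + 1), ?_, ?_⟩, ?_, ?_⟩
    · intro i hi
      rcases Multiset.mem_add.1 hi with hi | hi
      · exact q.1.parts_pos hi
      · rw [Multiset.eq_of_mem_replicate hi]; omega
    · rw [Multiset.sum_add, Multiset.sum_replicate, smul_eq_mul, q.1.parts_sum]
      omega
    · rw [largestRRep_eq_iff]
      refine ⟨Or.inr ?_, fun k hk => ?_⟩
      · rw [Multiset.count_add, Multiset.count_replicate]
        split_ifs <;> omega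
      · rw [Multiset.count_add, Multiset.count_replicate]
        have hk2 := hch.2 k hk
        rcases eq_or_ne k (j + 1) with rfl | hk1 <;> split_ifs <;> omega
    · rw [Multiset.count_add, Multiset.count_replicate]
      have := hch.1
      split_ifs <;> omega
  left_inv p := by
    have hch := (largestRRep_eq_iff p.1 (j + 1)).1 p.2.1
    have hr : Multiset.replicate 2 (j + 1) ≤ p.1.parts :=
      Multiset.le_count_iff_replicate_le.1 (by omega)
    apply Subtype.ext; apply Nat.Partition.ext
    exact tsub_add_cancel_of_le hr
  right_inv q := by
    apply Subtype.ext; apply Nat.Partition.ext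
    exact add_tsub_cancel_right _ _

end EvenRep

namespace EvenRep
open Multiset

lemma NA_rec (n j : ℕ) (h : 2 * (j + 1) ≤ n) :
    NA n (j + 1) = NA (n - 2) j + NA (n - 2 * (j + 1)) (j + 1) := by
  rw [NA, card_split (fun p : n.Partition => (p.parts.filter (fun x => Even x)).card = j + 1)
    (fun p => 2 ∈ p.parts)]
  congr 1
  · exact Nat.card_congr (equivA1 n j (by omega))
  · exact Nat.card_congr (equivA2 n (j + 1) (by omega))

lemma NB_rec (n j : ℕ) (h : 2 * (j + 1) ≤ n) :
    NB n (j + 1) = NB (n - 2) j + NB (n - 2 * (j + 1)) (j + 1) := by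
  rw [NB, card_split (fun p : n.Partition => largestRRep 2 p = j + 1)
    (fun p => p.parts.count (j + 1) ≤ 3)]
  congr 1
  · exact Nat.card_congr (equivB1 n j (by omega))
  · exact Nat.card_congr (equivB2 n j h)

lemma NA_zero (n : ℕ) : NA n 0 = (Nat.Partition.odds n).card := by
  rw [NA, ← Nat.card_eq_finsetCard]
  apply Nat.card_congr
  apply Equiv.subtypeEquivRight
  intro p
  rw [Nat.Partition.odds, Nat.Partition.restricted, Finset.mem_filter]
  constructor
  · intro hp
    exact ⟨Finset.mem_univ _, Multiset.filter_eq_nil.1 (Multiset.card_eq_zero.1 hp)⟩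
  · intro hp
    rw [Multiset.card_eq_zero, Multiset.filter_eq_nil]
    exact hp.2

lemma NB_zero (n : ℕ) : NB n 0 = (Nat.Partition.distincts n).card := by
  rw [NB, ← Nat.card_eq_finsetCard]
  apply Nat.card_congr
  apply Equiv.subtypeEquivRight
  intro p
  rw [Nat.Partition.distincts, Finset.mem_filter, largestRRep_eq_iff,
    Multiset.nodup_iff_count_le_one]
  constructor
  · rintro ⟨-, h2⟩
    refine ⟨Finset.mem_univ _, fun a => ?_⟩
    rcases Nat.eq_zero_or_pos a with rfl | ha
    · rw [count_zero_parts]; omega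
    · exact h2 a ha
  · rintro ⟨-, h⟩
    exact ⟨Or.inl rfl, fun k _ => h k⟩

lemma NA_eq_NB (n : ℕ) : ∀ j, NA n j = NB n j := by
  induction n using Nat.strong_induction_on with
  | _ n ih =>
    intro j
    match j with
    | 0 => rw [NA_zero, NB_zero, Theorems100.partition_theorem]
    | j + 1 =>
      by_cases h : 2 * (j + 1) ≤ n
      · rw [NA_rec n j h, NB_rec n j h, ih (n - 2) (by omega) j,
          ih (n - 2 * (j + 1)) (by omega) (j + 1)]
      · rw [NA_eq_zero n j (by omega), NB_eq_zero n j (by omega)]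

end EvenRep


/-- The number of partitions of n with exactly j even parts equals the number
of partitions of n whose largest repeating part is j. -/
theorem even_parts_eq_largest_repeating (n j : ℕ) :
    Nat.card {p : n.Partition // (p.parts.filter (fun x => Even x)).card = j} =
      Nat.card {p : n.Partition // largestRRep 2 p = j} := by
  exact EvenRep.NA_eq_NB n j
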